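/- Let X be a compact topological space, k a continuous positive definite kernel on X with finite-dimensional RKHS F, and p a Borel probability measure on X with full support. Then the function Ω(f) = max_{x∈X} f(x) − ⟨μ, f⟩, where μ = ∫ Φ(x) dp(x), is a norm on the direction space F̃ of the affine hull of the marginal polytope; consequently there exists d > 0 such that ⟨μ,f⟩ + d‖f‖ ≤ max_{x∈X} f(x) for all f ∈ F̃, i.e., μ lies in the relative interior of M. -/

import Mathlib

open MeasureTheory
open scoped RealInnerProductSpace

/-- For a continuous kernel with finite-dimensional RKHS `F` on a compact space `X`
and a probability measure `p` of full support, `Ω(f) = max_x f(x) − ⟪μ, f⟫` is a norm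
on the direction space `F̃` of the affine hull of the marginal polytope (in particular
it is definite), and consequently there exists `d > 0` with
`⟪μ, f⟫ + d‖f‖ ≤ max_x f(x)` for all `f ∈ F̃`: `μ` is in the relative interior of `M`. -/
theorem mean_in_relative_interior_finite_dimensional
    {F : Type*} [NormedAddCommGroup F] [InnerProductSpace ℝ F]
    [FiniteDimensional ℝ F]
    {X : Type*} [TopologicalSpace X] [CompactSpace X] [Nonempty X]
    [MeasurableSpace X] [BorelSpace X]
    (Φ : X → F) (hΦ : Continuous Φ)
    (hspan : Submodule.span ℝ (Set.range Φ) = ⊤)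
    (p : Measure X) [IsProbabilityMeasure p]
    (hsupp : ∀ U : Set X, IsOpen U → U.Nonempty → 0 < p U)
    (hint : Integrable Φ p)
    (μ : F) (hμ : μ = ∫ x, Φ x ∂p) :
    (∀ f ∈ (affineSpan ℝ (Set.range Φ)).direction,
        (⨆ x : X, ⟪f, Φ x⟫) - ⟪μ, f⟫ = 0 → f = 0) ∧
    ∃ d > (0 : ℝ), ∀ f ∈ (affineSpan ℝ (Set.range Φ)).direction,
        ⟪μ, f⟫ + d * ‖f‖ ≤ ⨆ x : X, ⟪f, Φ x⟫ := by
  classical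
  haveI : p.IsOpenPosMeasure := ⟨fun U hU hne => (hsupp U hU hne).ne'⟩
  -- a bound on ‖Φ x‖
  obtain ⟨xC, -, hxC'⟩ := isCompact_univ.exists_isMaxOn Set.univ_nonempty
      (continuous_norm.comp hΦ).continuousOn
  have hxC := isMaxOn_iff.mp hxC'
  set C := ‖Φ xC‖ with hCdef
  have hC0 : (0 : ℝ) ≤ C := norm_nonneg _
  have hbd : ∀ (f : F) (x : X), ⟪f, Φ x⟫ ≤ ‖f‖ * C := by
    intro f x
    refine le_trans (real_inner_le_norm f (Φ x)) ?_
    have hx := hxC x (Set.mem_univ x)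
    simp only [Function.comp_apply] at hx
    nlinarith [norm_nonneg f]
  have hbdd : ∀ f : F, BddAbove (Set.range fun x : X => ⟪f, Φ x⟫) := by
    intro f
    exact ⟨‖f‖ * C, by rintro _ ⟨x, rfl⟩; exact hbd f x⟩
  -- the sup is attained
  have hmax : ∀ f : F, ∃ x₀ : X,
      (⨆ x : X, ⟪f, Φ x⟫) = ⟪f, Φ x₀⟫ ∧ ∀ x, ⟪f, Φ x⟫ ≤ ⟪f, Φ x₀⟫ := by
    intro f
    obtain ⟨x₀, -, hx₀'⟩ := isCompact_univ.exists_isMaxOn (f := fun x : X => ⟪f, Φ x⟫)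
      Set.univ_nonempty (continuous_const.inner hΦ).continuousOn
    have hx₀ := isMaxOn_iff.mp hx₀'
    exact ⟨x₀, le_antisymm (ciSup_le fun x => hx₀ x (Set.mem_univ x))
      (le_ciSup (hbdd f) x₀), fun x => hx₀ x (Set.mem_univ x)⟩
  -- integrability of x ↦ ⟪f, Φ x⟫
  have hgint : ∀ f : F, Integrable (fun x => ⟪f, Φ x⟫) p := fun f =>
    (innerSL ℝ f).integrable_comp hint
  -- ⟪μ, f⟫ = ∫ ⟪f, Φ x⟫
  have hμf : ∀ f : F, ⟪μ, f⟫ = ∫ x, ⟪f, Φ x⟫ ∂p := by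
    intro f
    rw [real_inner_comm, hμ, integral_inner hint f]
  -- ⟪μ, f⟫ ≤ sup
  have hle : ∀ f : F, ⟪μ, f⟫ ≤ ⨆ x : X, ⟪f, Φ x⟫ := by
    intro f
    rw [hμf f]
    obtain ⟨x₀, hx₀, hmx⟩ := hmax f
    calc ∫ x, ⟪f, Φ x⟫ ∂p ≤ ∫ _, ⟪f, Φ x₀⟫ ∂p :=
          integral_mono (hgint f) (integrable_const _) fun x => hmx x
      _ = ⟪f, Φ x₀⟫ := by simp
      _ = ⨆ x : X, ⟪f, Φ x⟫ := hx₀.symm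
  -- definiteness
  have hdef : ∀ f ∈ (affineSpan ℝ (Set.range Φ)).direction,
      (⨆ x : X, ⟪f, Φ x⟫) - ⟪μ, f⟫ = 0 → f = 0 := by
    intro f hf h0
    obtain ⟨x₀, hx₀, hmx⟩ := hmax f
    -- the nonnegative continuous function x ↦ ⟪f,Φ x₀⟫ - ⟪f,Φ x⟫ has zero integral
    have hint0 : ∫ x, (⟪f, Φ x₀⟫ - ⟪f, Φ x⟫) ∂p = 0 := by
      rw [integral_sub (integrable_const _) (hgint f)]
      have : ∫ _, ⟪f, Φ x₀⟫ ∂p = ⟪f, Φ x₀⟫ := by simp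
      rw [this, ← hμf f, ← hx₀]
      linarith
    have hnn : (0 : X → ℝ) ≤ fun x => ⟪f, Φ x₀⟫ - ⟪f, Φ x⟫ := fun x => by
      simpa using sub_nonneg.mpr (hmx x)
    have hzero : (fun x => ⟪f, Φ x₀⟫ - ⟪f, Φ x⟫) = (fun _ => (0 : ℝ)) := by
      have hcont : Continuous fun x => ⟪f, Φ x₀⟫ - ⟪f, Φ x⟫ :=
        continuous_const.sub (continuous_const.inner hΦ)
      have hae : (fun x => ⟪f, Φ x₀⟫ - ⟪f, Φ x⟫) =ᵐ[p] (fun _ => (0 : ℝ)) :=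
        (integral_eq_zero_iff_of_nonneg hnn
          ((integrable_const _).sub (hgint f))).mp hint0
      exact (hcont.ae_eq_iff_eq p continuous_const).mp hae
    have hconst : ∀ x, ⟪f, Φ x⟫ = ⟪f, Φ x₀⟫ := by
      intro x
      have := congrFun hzero x
      try simp only at this
      linarith
    -- hence f is orthogonal to every element of the direction space
    have horth : ∀ v ∈ (affineSpan ℝ (Set.range Φ)).direction, ⟪f, v⟫ = 0 := by
      intro v hv
      rw [direction_affineSpan, vectorSpan_def] at hv
      induction hv using Submodule.span_induction with
      | mem v hv =>
          obtain ⟨a, ha, b, hb, rfl⟩ := hv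
          obtain ⟨xa, rfl⟩ := ha
          obtain ⟨xb, rfl⟩ := hb
          simp only [vsub_eq_sub, inner_sub_right, hconst xa, hconst xb, sub_self]
      | zero => simp
      | add u w _ _ hu hw => rw [inner_add_right, hu, hw, add_zero]
      | smul c u _ hu => rw [real_inner_smul_right, hu, mul_zero]
    have : ⟪f, f⟫ = 0 := horth f hf
    exact inner_self_eq_zero.mp this
  refine ⟨hdef, ?_⟩
  -- the functional N f = sup - ⟪μ,f⟫
  set N : F → ℝ := fun f => (⨆ x : X, ⟪f, Φ x⟫) - ⟪μ, f⟫ with hN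
  have hN0 : ∀ f, 0 ≤ N f := fun f => sub_nonneg.mpr (hle f)
  -- Lipschitz bound for the sup part
  have hsuplip : ∀ f g : F, (⨆ x : X, ⟪f, Φ x⟫) ≤ (⨆ x : X, ⟪g, Φ x⟫) + C * ‖f - g‖ := by
    intro f g
    obtain ⟨x₀, hx₀, -⟩ := hmax f
    rw [hx₀]
    have h1 : ⟪f, Φ x₀⟫ = ⟪g, Φ x₀⟫ + ⟪f - g, Φ x₀⟫ := by
      rw [inner_sub_left]; ring
    have h2 : ⟪g, Φ x₀⟫ ≤ ⨆ x : X, ⟪g, Φ x⟫ := le_ciSup (hbdd g) x₀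
    have h3 : ⟪f - g, Φ x₀⟫ ≤ ‖f - g‖ * C := hbd _ _
    rw [h1]
    nlinarith
  have hNcont : Continuous N := by
    have hsc : Continuous fun f : F => ⨆ x : X, ⟪f, Φ x⟫ := by
      refine (LipschitzWith.of_dist_le_mul (K := C.toNNReal) ?_).continuous
      intro f g
      rw [Real.dist_eq, Real.coe_toNNReal C hC0]
      have h1 := hsuplip f g
      have h2 := hsuplip g f
      rw [abs_le]
      constructor
      · have : ‖g - f‖ = dist f g := by rw [norm_sub_rev]; exact (dist_eq_norm f g).symm
        rw [← this]; linarith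
      · have : ‖f - g‖ = dist f g := (dist_eq_norm f g).symm
        rw [← this]; linarith
    exact hsc.sub (continuous_const.inner continuous_id)
  -- positive homogeneity for positive scalars
  have hhomog : ∀ (c : ℝ), 0 < c → ∀ f : F, N (c • f) = c * N f := by
    intro c hc f
    obtain ⟨x₀, hx₀, hmx⟩ := hmax f
    have hsup : (⨆ x : X, ⟪c • f, Φ x⟫) = c * ⟪f, Φ x₀⟫ := by
      refine le_antisymm (ciSup_le fun x => ?_) ?_
      · rw [real_inner_smul_left]
        exact mul_le_mul_of_nonneg_left (hmx x) hc.le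
      · have := le_ciSup (hbdd (c • f)) x₀
        rwa [real_inner_smul_left] at this
    rw [hN]
    simp only
    rw [hsup, hx₀, real_inner_smul_right]
    ring
  set D := (affineSpan ℝ (Set.range Φ)).direction with hDdef
  -- the unit sphere of D
  set K : Set F := (D : Set F) ∩ Metric.sphere 0 1 with hK
  have hKcpt : IsCompact K := by
    refine (isCompact_sphere (0 : F) 1).inter_left ?_
    exact (Submodule.closed_of_finiteDimensional D)
  rcases Set.eq_empty_or_nonempty K with hKe | hKne
  · -- no unit vectors in D: D = {0}
    refine ⟨1, one_pos, fun f hf => ?_⟩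
    have hf0 : f = 0 := by
      by_contra h0
      have hu : (‖f‖⁻¹ • f) ∈ K := by
        constructor
        · exact Submodule.smul_mem D _ hf
        · simp [norm_smul, abs_of_nonneg (inv_nonneg.mpr (norm_nonneg f)),
            inv_mul_cancel₀ (norm_ne_zero_iff.mpr h0)]
      rw [hKe] at hu
      exact hu
    subst hf0
    simp only [inner_zero_right, norm_zero, mul_zero, add_zero, inner_zero_left]
    rw [ciSup_const]
  · -- minimize N over K
    obtain ⟨f₀, hf₀K, hf₀min'⟩ := hKcpt.exists_isMinOn hKne hNcont.continuousOn
    have hf₀min := isMinOn_iff.mp hf₀min'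
    have hf₀D : f₀ ∈ D := hf₀K.1
    have hf₀n : ‖f₀‖ = 1 := by simpa using hf₀K.2
    have hd0 : 0 < N f₀ := by
      rcases lt_or_eq_of_le (hN0 f₀) with h | h
      · exact h
      · exfalso
        have : f₀ = 0 := hdef f₀ hf₀D h.symm
        rw [this] at hf₀n
        simp at hf₀n
    refine ⟨N f₀, hd0, fun f hf => ?_⟩
    rcases eq_or_ne f 0 with rfl | hne
    · simp only [inner_zero_right, norm_zero, mul_zero, add_zero, inner_zero_left]
      rw [ciSup_const]
    · have hnf : (0 : ℝ) < ‖f‖ := norm_pos_iff.mpr hne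
      set u := ‖f‖⁻¹ • f with hu
      have huK : u ∈ K := by
        constructor
        · exact Submodule.smul_mem D _ hf
        · simp [hu, norm_smul, abs_of_nonneg (inv_nonneg.mpr (norm_nonneg f)),
            inv_mul_cancel₀ hnf.ne']
      have h1 : N f₀ ≤ N u := hf₀min u huK
      have h2 : N f = ‖f‖ * N u := by
        have hfu : f = ‖f‖ • u := by
          rw [hu, smul_smul, mul_inv_cancel₀ hnf.ne', one_smul]
        conv_lhs => rw [hfu]
        exact hhomog ‖f‖ hnf u
      have h3 : N f₀ * ‖f‖ ≤ N f := by
        rw [h2]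
        calc N f₀ * ‖f‖ = ‖f‖ * N f₀ := by ring
          _ ≤ ‖f‖ * N u := mul_le_mul_of_nonneg_left h1 hnf.le
      have h4 : N f = (⨆ x : X, ⟪f, Φ x⟫) - ⟪μ, f⟫ := rfl
      linarith
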